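/- Let G be a torsion-free polycyclic group. Then the projective dimension pd(G) is at most the Hirsch length h(G) of G. -/

import Mathlib

/-!
STATEMENT 7 (Proposition): Let `G` be a torsion-free polycyclic group. Then
`pd(G) ≤ h(G)`, the Hirsch length of `G` (the number of infinite cyclic factors in a
polycyclic series; since it does not depend on the series, we state the bound for
every polycyclic series of `G`).
-/


/-- `H/N` (the quotient of the `G`-group `H`, with distinguished copy of `G` given by
`ι : G →* H`, by the normal subgroup `N`) is `G`-discriminated by `G`: for every finite
subset there is a `G`-homomorphism to `G` (i.e. one fixing `G` pointwise and killing `N`)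
injective on it (modulo `N`). -/
def DiscriminatesQuot {G H : Type*} [Group G] [Group H] (ι : G →* H) (N : Subgroup H) : Prop :=
  ∀ K : Finset H, ∃ φ : H →* G, φ.comp ι = MonoidHom.id G ∧ N ≤ φ.ker ∧
    ∀ x ∈ K, ∀ y ∈ K, φ x = φ y → x⁻¹ * y ∈ N

/-- A prime ideal of the `G`-group `H`: a normal subgroup meeting the distinguished copy
of `G` trivially and such that `H/N` is `G`-discriminated by `G`. -/
def IsPrimeIdeal {G H : Type*} [Group G] [Group H] (ι : G →* H) (N : Subgroup H) : Prop :=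
  N.Normal ∧ (∀ g : G, ι g ∈ N → g = 1) ∧ DiscriminatesQuot ι N

/-- The Krull dimension of the `G`-group `H`: the supremum of lengths of chains of
distinct prime ideals. -/
noncomputable def KdimG {G H : Type*} [Group G] [Group H] (ι : G →* H) : ℕ∞ :=
  ⨆ (k : ℕ) (_ : ∃ p : Fin (k + 1) → Subgroup H, StrictMono p ∧ ∀ i, IsPrimeIdeal ι (p i)),
    (k : ℕ∞)

/-- The projective dimension of the `G`-group `H` (which is `G`-discriminated by `G`):
the supremum of lengths `k` of chains `H = H_0 → H_1 → ... → H_k = G` of proper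
`G`-epimorphisms of `G`-groups `G`-discriminated by `G`; such a chain is encoded by the
strictly increasing chain of kernels `N i ≤ H`, with `H/N k ≅ G` as `G`-groups. -/
noncomputable def pdG {G H : Type*} [Group G] [Group H] (ι : G →* H) : ℕ∞ :=
  ⨆ (k : ℕ) (_ : ∃ N : Fin (k + 1) → Subgroup H, StrictMono N ∧ N 0 = ⊥ ∧
      (∀ i, (N i).Normal ∧ (∀ g : G, ι g ∈ N i → g = 1) ∧ DiscriminatesQuot ι (N i)) ∧
      (∀ h : H, ∃ g : G, (ι g)⁻¹ * h ∈ N (Fin.last k))), (k : ℕ∞)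

/-- `A` discriminates `B`: every finite subset of `B` is mapped injectively into `A`
by some homomorphism. -/
def Discriminates (A : Type*) [Group A] (B : Type*) [Group B] : Prop :=
  ∀ K : Finset B, ∃ φ : B →* A, Set.InjOn φ ↑K

/-- The projective dimension `pd(H)` of a group `H`: the supremum of lengths `k` of chains
`H = H_1 → H_2 → ... → H_{k+1}` of proper epimorphisms in which each `H_i` and `H`
mutually discriminate each other; such a chain is encoded by the strictly increasing
chain of kernels `N i`. -/
noncomputable def projDim (H : Type*) [Group H] : ℕ∞ :=
  ⨆ (k : ℕ) (_ : ∃ (N : Fin (k + 1) → Subgroup H) (hN : ∀ i, (N i).Normal),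
      StrictMono N ∧ N 0 = ⊥ ∧
      ∀ i, @Discriminates H _ (H ⧸ N i) (@QuotientGroup.Quotient.group H _ (N i) (hN i)) ∧
        @Discriminates (H ⧸ N i) (@QuotientGroup.Quotient.group H _ (N i) (hN i)) H _),
    (k : ℕ∞)

/-- `s` is a polycyclic series: a subnormal series from `G` to `1` with cyclic factors
(`c` generates `s i` modulo `s (i+1)`). -/
def IsPolycyclicSeries {G : Type*} [Group G] {k : ℕ} (s : Fin (k + 1) → Subgroup G) : Prop :=
  s 0 = ⊤ ∧ s (Fin.last k) = ⊥ ∧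
  (∀ i : Fin k, s i.succ ≤ s i.castSucc) ∧
  (∀ i : Fin k, ∀ x ∈ s i.castSucc, ∀ y ∈ s i.succ, x⁻¹ * y * x ∈ s i.succ) ∧
  (∀ i : Fin k, ∃ c ∈ s i.castSucc, ∀ x ∈ s i.castSucc, ∃ m : ℤ, (c ^ m)⁻¹ * x ∈ s i.succ)

/-- The factor `s i / s (i+1)` is infinite (cyclic): some element has infinite order
modulo `s (i+1)`. -/
def InfiniteFactor {G : Type*} [Group G] {k : ℕ} (s : Fin (k + 1) → Subgroup G)
    (i : Fin k) : Prop :=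
  ∃ x ∈ s i.castSucc, ∀ m : ℤ, m ≠ 0 → x ^ m ∉ s i.succ

/-- The old Mathlib `Monoid.IsTorsionFree` (removed since), with its old meaning. -/
def Monoid.IsTorsionFree (G : Type*) [Monoid G] : Prop :=
  ∀ g : G, g ≠ 1 → ¬IsOfFinOrder g

section Aux

variable {G : Type} [Group G]

/-- From discrimination into a torsion-free group, kernels are isolated. -/
lemma aux_isolated (hTF : Monoid.IsTorsionFree G) (N : Subgroup G) [N.Normal]
    (hd : Discriminates G (G ⧸ N)) {x : G} {n : ℕ} (hn0 : 0 < n) (hx : x ^ n ∈ N) :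
    x ∈ N := by
  classical
  obtain ⟨φ, hφ⟩ := hd {((x : G ⧸ N)), 1}
  have h1 : φ ((x : G ⧸ N)) ^ n = 1 := by
    rw [← map_pow, ← QuotientGroup.mk_pow, (QuotientGroup.eq_one_iff (x ^ n)).mpr hx, map_one]
  have hfo : φ ((x : G ⧸ N)) = 1 := by
    by_contra hne
    exact hTF _ hne (isOfFinOrder_iff_pow_eq_one.mpr ⟨n, hn0, h1⟩)
  have hxq : ((x : G ⧸ N)) = (1 : G ⧸ N) :=
    hφ (by simp) (by simp) (by rw [hfo, map_one])
  exact (QuotientGroup.eq_one_iff x).mp hxq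

/-- Key lemma: if `N ≤ M`, `N` normal, and at each infinite factor `M` reaches outside
`s i.succ` only when `N` does, then every element of `M` has a positive power in `N`. -/
lemma aux_key {k : ℕ} {s : Fin (k + 1) → Subgroup G} (hs : IsPolycyclicSeries s)
    (N M : Subgroup G) [N.Normal] (hNM : N ≤ M)
    (hD : ∀ i : Fin k, InfiniteFactor s i →
      (∃ u, u ∈ M ∧ u ∈ s i.castSucc ∧ u ∉ s i.succ) →
      (∃ u, u ∈ N ∧ u ∈ s i.castSucc ∧ u ∉ s i.succ)) :
    ∀ x ∈ M, ∃ n : ℕ, 0 < n ∧ x ^ n ∈ N := by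
  classical
  obtain ⟨h0, hlast, hle, hconj, hcyc⟩ := hs
  have Pstep : ∀ i : Fin k, ∀ x, x ∈ M → x ∈ s i.castSucc →
      ∃ (n : ℕ) (w : G), 0 < n ∧ w ∈ N ∧ w⁻¹ * x ^ n ∈ s i.succ := by
    intro i x hxM hxS
    by_cases hdN : ∃ u, u ∈ N ∧ u ∈ s i.castSucc ∧ u ∉ s i.succ
    · -- the cyclic-factor case
      obtain ⟨u, huN, huS, huT⟩ := hdN
      obtain ⟨c, hcS, hcgen⟩ := hcyc i
      set S := s i.castSucc with hSdef
      letI : ((s i.succ).subgroupOf S).Normal := by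
        constructor
        intro t ht g
        rw [Subgroup.mem_subgroupOf] at ht ⊢
        have h := hconj i (↑g⁻¹) g⁻¹.2 (↑t) ht
        simpa [mul_assoc] using h
      set T := (s i.succ).subgroupOf S with hTdef
      have hmkeq : ∀ a b : S, ((a : S ⧸ T)) = ((b : S ⧸ T)) ↔ (a : G)⁻¹ * (b : G) ∈ s i.succ := by
        intro a b
        rw [QuotientGroup.eq, Subgroup.mem_subgroupOf]
        push_cast
        rfl
      have hmk1 : ∀ a : S, ((a : S ⧸ T)) = 1 ↔ (a : G) ∈ s i.succ := by
        intro a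
        rw [QuotientGroup.eq_one_iff, Subgroup.mem_subgroupOf]
      set cS : S := ⟨c, hcS⟩
      have hgen : ∀ a : S, ∃ m : ℤ, ((a : S ⧸ T)) = ((cS : S ⧸ T)) ^ m := by
        intro a
        obtain ⟨m, hm⟩ := hcgen (↑a) a.2
        refine ⟨m, ?_⟩
        rw [← QuotientGroup.mk_zpow]
        exact ((hmkeq (cS ^ m) a).mpr (by simpa using hm)).symm
      set uS : S := ⟨u, huS⟩
      set xS : S := ⟨x, hxS⟩
      obtain ⟨au, hau⟩ := hgen uS
      obtain ⟨ax, hax⟩ := hgen xS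
      have hau0 : au ≠ 0 := by
        intro h
        rw [h, zpow_zero] at hau
        exact huT ((hmk1 uS).mp hau)
      have hmain : ((xS : S ⧸ T)) ^ au = ((uS : S ⧸ T)) ^ ax := by
        rw [hax, hau, ← zpow_mul, ← zpow_mul, mul_comm]
      set n : ℕ := au.natAbs with hndef
      have hnpos : 0 < n := Int.natAbs_pos.mpr hau0
      -- choose the right power of u
      have hfin : ∃ b : ℤ, ((xS : S ⧸ T)) ^ (n : ℤ) = ((uS : S ⧸ T)) ^ b := by
        rcases Int.natAbs_eq au with h | h
        · have hna : (n : ℤ) = au := by omega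
          exact ⟨ax, by rw [hna]; exact hmain⟩
        · refine ⟨-ax, ?_⟩
          have hna : (n : ℤ) = -au := by omega
          rw [hna, zpow_neg, zpow_neg, hmain]
      obtain ⟨b, hb⟩ := hfin
      have hb' : ((uS ^ b : S) : S ⧸ T) = (((xS ^ (n : ℤ) : S)) : S ⧸ T) := by
        rw [QuotientGroup.mk_zpow, QuotientGroup.mk_zpow, hb]
      have hmem := (hmkeq (uS ^ b) (xS ^ (n : ℤ))).mp hb'
      refine ⟨n, u ^ b, hnpos, N.zpow_mem huN b, ?_⟩
      have hcoe1 : ((uS ^ b : S) : G) = u ^ b := by push_cast; rfl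
      have hcoe2 : ((xS ^ (n : ℤ) : S) : G) = x ^ n := by push_cast [zpow_natCast]; rfl
      rwa [hcoe1, hcoe2] at hmem
    · by_cases hinf : InfiniteFactor s i
      · -- infinite factor where N (hence M) is trivial modulo s i.succ
        have hdM : ¬∃ u, u ∈ M ∧ u ∈ s i.castSucc ∧ u ∉ s i.succ := fun h => hdN (hD i hinf h)
        push_neg at hdM
        exact ⟨1, 1, one_pos, N.one_mem, by simpa using hdM x hxM hxS⟩
      · -- finite factor: every element is torsion modulo s i.succ
        rw [InfiniteFactor] at hinf
        push_neg at hinf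
        obtain ⟨m, hm0, hmmem⟩ := hinf x hxS
        refine ⟨m.natAbs, 1, Int.natAbs_pos.mpr hm0, N.one_mem, ?_⟩
        have : x ^ ((m.natAbs : ℤ)) ∈ s i.succ := by
          rcases Int.natAbs_eq m with h | h
          · rw [← h]; exact hmmem
          · have : ((m.natAbs : ℤ)) = -m := by omega
            rw [this, zpow_neg]
            exact (s i.succ).inv_mem hmmem
        rw [zpow_natCast] at this
        simpa using this
  -- downward induction along the series
  have main : ∀ j : ℕ, ∀ hj : j ≤ k, ∀ x, x ∈ M → x ∈ s ⟨k - j, by omega⟩ →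
      ∃ n : ℕ, 0 < n ∧ x ^ n ∈ N := by
    intro j
    induction j with
    | zero =>
      intro _ x hxM hxS
      have hbot : s ⟨k - 0, by omega⟩ = ⊥ := by
        have : (⟨k - 0, by omega⟩ : Fin (k + 1)) = Fin.last k := by
          ext; simp
        rw [this, hlast]
      rw [hbot, Subgroup.mem_bot] at hxS
      exact ⟨1, one_pos, by rw [hxS]; simpa using N.one_mem⟩
    | succ j ih =>
      intro hj x hxM hxS
      have hik : k - (j + 1) < k := by omega
      set i : Fin k := ⟨k - (j + 1), hik⟩ with hidef
      have hcast : i.castSucc = ⟨k - (j + 1), by omega⟩ := rfl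
      obtain ⟨n, w, hn, hwN, hws⟩ := Pstep i x hxM (by rw [hcast]; exact hxS)
      have hsucc : i.succ = ⟨k - j, by omega⟩ := by
        ext
        simp only [Fin.val_succ, hidef]
        omega
      have hyM : w⁻¹ * x ^ n ∈ M := M.mul_mem (M.inv_mem (hNM hwN)) (M.pow_mem hxM n)
      obtain ⟨m, hm, hym⟩ := ih (by omega) _ hyM (by rw [← hsucc]; exact hws)
      refine ⟨n * m, Nat.mul_pos hn hm, ?_⟩
      have hw1 : ((w : G ⧸ N)) = 1 := (QuotientGroup.eq_one_iff w).mpr hwN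
      have hy1 : (((w⁻¹ * x ^ n) ^ m : G) : G ⧸ N) = 1 := (QuotientGroup.eq_one_iff _).mpr hym
      apply (QuotientGroup.eq_one_iff _).mp
      have hxn : ((x ^ n : G) : G ⧸ N) = ((w⁻¹ * x ^ n : G) : G ⧸ N) := by
        rw [QuotientGroup.mk_mul, QuotientGroup.mk_inv, hw1]
        simp
      calc ((x ^ (n * m) : G) : G ⧸ N) = (((x ^ n) ^ m : G) : G ⧸ N) := by rw [pow_mul]
        _ = (((x ^ n : G) : G ⧸ N)) ^ m := by rw [QuotientGroup.mk_pow]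
        _ = (((w⁻¹ * x ^ n : G) : G ⧸ N)) ^ m := by rw [hxn]
        _ = (((w⁻¹ * x ^ n) ^ m : G) : G ⧸ N) := by rw [QuotientGroup.mk_pow]
        _ = 1 := hy1
  intro x hxM
  have hx0 : x ∈ s ⟨k - k, by omega⟩ := by
    have : (⟨k - k, by omega⟩ : Fin (k + 1)) = 0 := by ext; simp
    rw [this, h0]
    trivial
  exact main k le_rfl x hxM hx0

end Aux

theorem stmt7 {G : Type} [Group G] (hTF : Monoid.IsTorsionFree G)
    (k : ℕ) (s : Fin (k + 1) → Subgroup G) (hs : IsPolycyclicSeries s) :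
    projDim G ≤ (Nat.card {i : Fin k // InfiniteFactor s i} : ℕ∞) := by
  classical
  refine iSup_le fun k' => iSup_le fun hp => ?_
  obtain ⟨N, hN, hmonoN, h0N, hdisc⟩ := hp
  have hiso : ∀ (j : Fin (k' + 1)) (x : G) (n : ℕ), 0 < n → x ^ n ∈ N j → x ∈ N j := by
    intro j x n h1 h2
    haveI := hN j
    exact aux_isolated hTF (N j) (hdisc j).1 h1 h2
  set D : Fin (k' + 1) → Finset (Fin k) := fun j =>
    Finset.univ.filter fun i => InfiniteFactor s i ∧
      ∃ u, u ∈ N j ∧ u ∈ s i.castSucc ∧ u ∉ s i.succ with hDdef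
  have hmem : ∀ (j : Fin (k' + 1)) (i : Fin k), i ∈ D j ↔ InfiniteFactor s i ∧
      ∃ u, u ∈ N j ∧ u ∈ s i.castSucc ∧ u ∉ s i.succ := by
    intro j i; simp [hDdef]
  have hDss : ∀ j : Fin k', D j.castSucc ⊂ D j.succ := by
    intro j
    have hlt : N j.castSucc < N j.succ := hmonoN (Fin.castSucc_lt_succ : j.castSucc < j.succ)
    have hsubset : D j.castSucc ⊆ D j.succ := by
      intro i hi
      rw [hmem] at hi ⊢
      obtain ⟨h1, u, hu1, hu2, hu3⟩ := hi
      exact ⟨h1, u, hlt.le hu1, hu2, hu3⟩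
    refine lt_of_le_of_ne hsubset fun heq => ?_
    haveI := hN j.castSucc
    have key := aux_key hs (N j.castSucc) (N j.succ) hlt.le ?_
    · have hle2 : N j.succ ≤ N j.castSucc := by
        intro x hx
        obtain ⟨n, hn, hxn⟩ := key x hx
        exact hiso _ x n hn hxn
      exact absurd hle2 (not_le_of_gt hlt)
    · intro i hinf hdM
      have h1 : i ∈ D j.succ := (hmem _ _).mpr ⟨hinf, hdM⟩
      rw [← heq, hmem] at h1
      exact h1.2
  have hcard : ∀ m : ℕ, ∀ h : m ≤ k', m ≤ (D ⟨m, by omega⟩).card := by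
    intro m
    induction m with
    | zero => intro _; exact Nat.zero_le _
    | succ m ih =>
      intro h
      have h2 : m < k' := h
      have hss := hDss ⟨m, h2⟩
      have hle1 : D (⟨m, h2⟩ : Fin k').castSucc = D ⟨m, by omega⟩ := rfl
      have hle2 : D (⟨m, h2⟩ : Fin k').succ = D ⟨m + 1, by omega⟩ := rfl
      rw [hle1, hle2] at hss
      have := Finset.card_lt_card hss
      have := ih (by omega)
      omega
  have hlast : (k' : ℕ) ≤ (D (Fin.last k')).card := by
    have : Fin.last k' = ⟨k', by omega⟩ := rfl
    rw [this]
    exact hcard k' le_rfl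
  have hfin : (D (Fin.last k')).card ≤ Nat.card {i : Fin k // InfiniteFactor s i} := by
    rw [Nat.card_eq_fintype_card, Fintype.card_subtype]
    apply Finset.card_le_card
    intro i hi
    simp only [Finset.mem_filter, Finset.mem_univ, true_and]
    exact ((hmem _ _).mp hi).1
  exact_mod_cast le_trans hlast hfin
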